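/- For every odd integer p ≥ 3, with f₂(p) = (p+1)/(2(p²+2p+2)), one has f₂(p-2) + f₂(p) - 1/p = -4/(p⁵ + 4p). -/

import Mathlib

theorem madhava_sthaulya_second (p : ℤ) (hp : 3 ≤ p) (hodd : Odd p) :
    (((p : ℝ) - 2) + 1) / (2 * (((p : ℝ) - 2) ^ 2 + 2 * ((p : ℝ) - 2) + 2))
      + ((p : ℝ) + 1) / (2 * ((p : ℝ) ^ 2 + 2 * (p : ℝ) + 2)) - 1 / (p : ℝ)
      = -4 / ((p : ℝ) ^ 5 + 4 * (p : ℝ)) := by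
  have hp' : (3 : ℝ) ≤ (p : ℝ) := by exact_mod_cast hp
  have h0 : (p : ℝ) > 0 := by linarith
  have h1 : (((p : ℝ) - 2) ^ 2 + 2 * ((p : ℝ) - 2) + 2) > 0 := by nlinarith
  have h2 : ((p : ℝ) ^ 2 + 2 * (p : ℝ) + 2) > 0 := by nlinarith
  have h3 : ((p : ℝ) ^ 5 + 4 * (p : ℝ)) > 0 := by positivity
  rw [div_add_div _ _ (mul_pos two_pos h1).ne' (mul_pos two_pos h2).ne', div_sub_div _ _ (by positivity) h0.ne', div_eq_div_iff (by positivity) h3.ne']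
  ring
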